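/- Let H and G be groups, θ : G → Aut(H) a group action by automorphisms, and K = H ⋊_θ G the semidirect product. If φ₁ : H → ℂ is a positive-definite function that is θ-invariant (φ₁(θ_g(h)) = φ₁(h) for all g ∈ G, h ∈ H) and φ₂ : G → ℂ is positive definite, then the function φ : K → ℂ defined by φ(h, g) = φ₁(h) · φ₂(g) is positive definite on K. -/

import Mathlib

open scoped ComplexOrder

open Matrix

/-- A function `φ : Γ → ℂ` on a group is positive definite if for every finite
family `γ₁, …, γ_k` the matrix `[φ(γᵢ⁻¹ γⱼ)]` is positive semidefinite. -/
def IsPosDefFn {Γ : Type*} [Group Γ] (φ : Γ → ℂ) : Prop :=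
  ∀ (k : ℕ) (γ : Fin k → Γ),
    (Matrix.of fun i j => φ ((γ i)⁻¹ * γ j)).PosSemidef

/-- Schur product theorem for PSD complex matrices. -/
lemma posSemidef_schur {k : ℕ} {A B : Matrix (Fin k) (Fin k) ℂ}
    (hA : A.PosSemidef) (hB : B.PosSemidef) :
    (Matrix.of fun i j => A i j * B i j).PosSemidef := by
  obtain ⟨C, hC⟩ : ∃ C : Matrix (Fin k) (Fin k) ℂ, A = Cᴴ * C := by
    open scoped MatrixOrder in
    obtain ⟨X, hX, -, hXA⟩ := CFC.exists_sqrt_of_isSelfAdjoint_of_quasispectrumRestricts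
      hA.isHermitian (QuasispectrumRestricts.nnreal_of_nonneg hA.nonneg)
    exact ⟨X, by rw [← hXA]; exact congrArg (· * X) hX.star_eq.symm⟩
  refine Matrix.PosSemidef.of_dotProduct_mulVec_nonneg ?_ ?_
  · ext i j
    simp only [Matrix.conjTranspose_apply, Matrix.of_apply, star_mul']
    rw [← Matrix.conjTranspose_apply A, ← Matrix.conjTranspose_apply B, hA.1, hB.1, mul_comm]
  · intro x
    have key : dotProduct (star x) (Matrix.mulVec (Matrix.of fun i j => A i j * B i j) x)
        = ∑ l, dotProduct (star fun i => C l i * x i)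
            (Matrix.mulVec B fun i => C l i * x i) := by
      simp only [dotProduct, Matrix.mulVec, Matrix.of_apply, Pi.star_apply, hC,
        Matrix.mul_apply, Matrix.conjTranspose_apply, star_mul', Finset.sum_mul,
        Finset.mul_sum]
      conv_rhs => rw [Finset.sum_comm]
      refine Finset.sum_congr rfl fun i _ => ?_
      rw [Finset.sum_comm]
      refine Finset.sum_congr rfl fun j _ => Finset.sum_congr rfl fun l _ => ?_
      ring
    rw [key]
    exact Finset.sum_nonneg fun l _ => hB.dotProduct_mulVec_nonneg _

/-- If `φ₁` is a `θ`-invariant positive definite function on `H` and `φ₂` is a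
positive definite function on `G`, then `(h, g) ↦ φ₁(h) φ₂(g)` is positive
definite on the semidirect product `H ⋊[θ] G`. -/
theorem posDefFn_semidirectProduct {H G : Type*} [Group H] [Group G]
    (θ : G →* MulAut H) (φ₁ : H → ℂ) (φ₂ : G → ℂ)
    (h₁ : IsPosDefFn φ₁) (hinv : ∀ (g : G) (h : H), φ₁ (θ g h) = φ₁ h)
    (h₂ : IsPosDefFn φ₂) :
    IsPosDefFn (fun k : H ⋊[θ] G => φ₁ k.left * φ₂ k.right) := by
  intro k γ
  have hkey : ∀ (g : G) (a b : H), φ₁ (θ g a⁻¹ * θ g b) = φ₁ (a⁻¹ * b) := by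
    intro g a b
    rw [← _root_.map_mul (θ g), hinv]
  have hEq : (Matrix.of fun i j =>
        (fun k : H ⋊[θ] G => φ₁ k.left * φ₂ k.right) ((γ i)⁻¹ * γ j))
      = Matrix.of fun i j =>
        (Matrix.of fun i j => φ₁ ((γ i).left⁻¹ * (γ j).left) : Matrix (Fin k) (Fin k) ℂ) i j *
        (Matrix.of fun i j => φ₂ ((γ i).right⁻¹ * (γ j).right) : Matrix (Fin k) (Fin k) ℂ) i j := by
    ext i j
    simp only [Matrix.of_apply, SemidirectProduct.mul_left, SemidirectProduct.mul_right,
      SemidirectProduct.inv_left, SemidirectProduct.inv_right, hkey]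
  exact hEq ▸ posSemidef_schur (h₁ k fun i => (γ i).left) (h₂ k fun i => (γ i).right)
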